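/- In a cubical set with connections, if θ = Γ_t^β(τ) for τ ∈ K_{n-1}, then ∂_{n+1} Γ_t^β(θ) + Γ_t^β ∂_n(θ) = (-1)^{t+1} β θ + 2 Γ_t^β Γ_{t-1}^β Σ_{i=1}^{t-1} (-1)^i (f_i^- − f_i^+)(τ), where β is interpreted as the sign +1 or −1. -/
import Mathlib


structure PrecubicalConn where
  K : ℕ → Type*
  face : Bool → ∀ n : ℕ, ℕ → K (n + 1) → K n
  degen : ∀ n : ℕ, ℕ → K n → K (n + 1)
  conn : Bool → ∀ n : ℕ, ℕ → K n → K (n + 1)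

/-- The axioms of a cubical set with connections (`true` stands for `+`, `false` for `-`;
indices are 1-based with explicit range guards). -/
structure CubicalConnAxioms (P : PrecubicalConn) : Prop where
  face_face : ∀ (α β : Bool) (n i j : ℕ) (σ : P.K (n + 2)), 1 ≤ i → i < j → j ≤ n + 2 →
    P.face α n i (P.face β (n + 1) j σ) = P.face β n (j - 1) (P.face α (n + 1) i σ)
  degen_degen : ∀ (n i j : ℕ) (σ : P.K n), 1 ≤ i → i ≤ j → j ≤ n + 1 →
    P.degen (n + 1) i (P.degen n j σ) = P.degen (n + 1) (j + 1) (P.degen n i σ)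
  face_degen_lt : ∀ (α : Bool) (n i j : ℕ) (σ : P.K (n + 1)), 1 ≤ i → i < j → j ≤ n + 2 →
    P.face α (n + 1) i (P.degen (n + 1) j σ) = P.degen n (j - 1) (P.face α n i σ)
  face_degen_gt : ∀ (α : Bool) (n i j : ℕ) (σ : P.K (n + 1)), 1 ≤ j → j < i → i ≤ n + 2 →
    P.face α (n + 1) i (P.degen (n + 1) j σ) = P.degen n j (P.face α n (i - 1) σ)
  face_degen_eq : ∀ (α : Bool) (n i : ℕ) (σ : P.K n), 1 ≤ i → i ≤ n + 1 →
    P.face α n i (P.degen n i σ) = σ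
  conn_conn : ∀ (α β : Bool) (n i j : ℕ) (σ : P.K n), 1 ≤ i → i ≤ j → j ≤ n →
    P.conn α (n + 1) i (P.conn β n j σ) = P.conn β (n + 1) (j + 1) (P.conn α n i σ)
  conn_degen_lt : ∀ (α : Bool) (n i j : ℕ) (σ : P.K n), 1 ≤ i → i < j → j ≤ n + 1 →
    P.conn α (n + 1) i (P.degen n j σ) = P.degen (n + 1) (j + 1) (P.conn α n i σ)
  conn_degen_gt : ∀ (α : Bool) (n i j : ℕ) (σ : P.K n), 1 ≤ j → j < i → i ≤ n + 1 →
    P.conn α (n + 1) i (P.degen n j σ) = P.degen (n + 1) j (P.conn α n (i - 1) σ)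
  conn_degen_eq : ∀ (α : Bool) (n i : ℕ) (σ : P.K n), 1 ≤ i → i ≤ n + 1 →
    P.conn α (n + 1) i (P.degen n i σ) = P.degen (n + 1) (i + 1) (P.degen n i σ)
  face_conn_lt : ∀ (α β : Bool) (n i j : ℕ) (σ : P.K (n + 1)), 1 ≤ i → i < j → j ≤ n + 1 →
    P.face α (n + 1) i (P.conn β (n + 1) j σ) = P.conn β n (j - 1) (P.face α n i σ)
  face_conn_gt : ∀ (α β : Bool) (n i j : ℕ) (σ : P.K (n + 1)), 1 ≤ j → j + 1 < i → i ≤ n + 2 →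
    P.face α (n + 1) i (P.conn β (n + 1) j σ) = P.conn β n j (P.face α n (i - 1) σ)
  face_conn_self : ∀ (β : Bool) (n i j : ℕ) (σ : P.K n), 1 ≤ j → j ≤ n → (i = j ∨ i = j + 1) →
    P.face β n i (P.conn β n j σ) = σ
  face_conn_opp : ∀ (α β : Bool) (n i j : ℕ) (σ : P.K (n + 1)), 1 ≤ j → j ≤ n + 1 →
    (i = j ∨ i = j + 1) → α ≠ β →
    P.face α (n + 1) i (P.conn β (n + 1) j σ) = P.degen n j (P.face α n j σ)

/-- A cube is degenerate if it is of the form `ε_i f_i^+ σ`. -/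
def PrecubicalConn.Degenerate (P : PrecubicalConn) : ∀ {n : ℕ}, P.K n → Prop :=
  fun {n} σ =>
    match n, σ with
    | 0, _ => False
    | m + 1, σ => ∃ i : ℕ, 1 ≤ i ∧ i ≤ m + 1 ∧ σ = P.degen m i (P.face true m i σ)

/-- A cube is a connection if it lies in the image of some `Γ_i^β`. -/
def PrecubicalConn.IsConn (P : PrecubicalConn) : ∀ {n : ℕ}, P.K n → Prop :=
  fun {n} σ =>
    match n, σ with
    | 0, _ => False
    | m + 1, σ => ∃ (β : Bool) (i : ℕ) (τ : P.K m), 1 ≤ i ∧ i ≤ m ∧ σ = P.conn β m i τ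

/-- The linear extension of the face map `f_i^α` to the free `R`-module on the cubes. -/
noncomputable def Fmap (P : PrecubicalConn) (R : Type*) [CommRing R] (α : Bool) (n i : ℕ) :
    (P.K (n + 1) →₀ R) →ₗ[R] (P.K n →₀ R) :=
  Finsupp.lmapDomain R R (P.face α n i)

/-- The linear extension of the connection map `Γ_i^β` to the free `R`-module on the cubes. -/
noncomputable def Gmap (P : PrecubicalConn) (R : Type*) [CommRing R] (β : Bool) (n i : ℕ) :
    (P.K n →₀ R) →ₗ[R] (P.K (n + 1) →₀ R) :=
  Finsupp.lmapDomain R R (P.conn β n i)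

/-- The cubical boundary operator `∂ σ = ∑_{i=1}^{n+1} (-1)^i (f_i^- σ - f_i^+ σ)`. -/
noncomputable def bdry (P : PrecubicalConn) (R : Type*) [CommRing R] (n : ℕ) :
    (P.K (n + 1) →₀ R) →ₗ[R] (P.K n →₀ R) :=
  ∑ i ∈ Finset.Icc 1 (n + 1), ((-1 : R) ^ i) • (Fmap P R false n i - Fmap P R true n i)

/-- The submodule generated by the degenerate cubes. -/
noncomputable def degenSub (P : PrecubicalConn) (R : Type*) [CommRing R] (n : ℕ) :
    Submodule R (P.K n →₀ R) :=
  Submodule.span R {x | ∃ σ : P.K n, P.Degenerate σ ∧ x = Finsupp.single σ 1}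

/-- The submodule generated by the connection cubes. -/
noncomputable def connSub (P : PrecubicalConn) (R : Type*) [CommRing R] (n : ℕ) :
    Submodule R (P.K n →₀ R) :=
  Submodule.span R {x | ∃ σ : P.K n, P.IsConn σ ∧ x = Finsupp.single σ 1}

/-- The sign `±1` associated to `β ∈ {+,-}`. -/
def sgn (R : Type*) [CommRing R] (β : Bool) : R := if β then 1 else -1


section Aux

open Finset

lemma Fmap_single (P : PrecubicalConn) (R : Type*) [CommRing R] (α : Bool) (n i : ℕ)
    (σ : P.K (n + 1)) :
    Fmap P R α n i (Finsupp.single σ 1) = Finsupp.single (P.face α n i σ) 1 := by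
  simp [Fmap]

lemma Gmap_single (P : PrecubicalConn) (R : Type*) [CommRing R] (β : Bool) (n i : ℕ)
    (σ : P.K n) :
    Gmap P R β n i (Finsupp.single σ 1) = Finsupp.single (P.conn β n i σ) 1 := by
  simp [Gmap]

lemma bdry_single (P : PrecubicalConn) (R : Type*) [CommRing R] (n : ℕ) (σ : P.K (n + 1)) :
    bdry P R n (Finsupp.single σ 1) =
      ∑ i ∈ Finset.Icc 1 (n + 1), ((-1 : R) ^ i) •
        (Finsupp.single (P.face false n i σ) 1 - Finsupp.single (P.face true n i σ) 1) := by
  simp [bdry, LinearMap.sum_apply, Fmap_single]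

lemma assembly {M : Type*} [AddCommGroup M] (n s : ℕ) (hsn : s ≤ n)
    (F G g : ℕ → M)
    (h1 : ∀ i ∈ Finset.Ioc 0 s, F i = g i)
    (h2 : ∀ j ∈ Finset.Ioc 0 s, G j = g j)
    (h3 : F (s + 1) + F (s + 1 + 1) = 0)
    (h4 : ∀ j ∈ Finset.Ioc (s + 1) (n + 1 + 1), F (j + 1) = -G j) :
    (∑ i ∈ Finset.Ioc 0 (n + 2 + 1), F i) + ∑ j ∈ Finset.Ioc 0 (n + 1 + 1), G j
      = (∑ i ∈ Finset.Ioc 0 s, g i) + (∑ i ∈ Finset.Ioc 0 s, g i) + G (s + 1) := by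
  have e1 : (∑ i ∈ Finset.Ioc 0 (n + 2 + 1), F i)
      = ((∑ i ∈ Finset.Ioc 0 s, F i) + (F (s + 1) + F (s + 1 + 1)))
        + ∑ i ∈ Finset.Ioc (s + 1 + 1) (n + 2 + 1), F i := by
    rw [← Finset.sum_Ioc_consecutive F (Nat.zero_le (s + 1 + 1)) (by omega),
        ← Finset.sum_Ioc_consecutive F (Nat.zero_le s) (by omega : s ≤ s + 1 + 1),
        Finset.sum_Ioc_succ_top (by omega : s ≤ s + 1) F,
        Finset.sum_Ioc_succ_top (le_refl s) F, Finset.Ioc_self, Finset.sum_empty, zero_add]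
  have e2 : (∑ j ∈ Finset.Ioc 0 (n + 1 + 1), G j)
      = ((∑ j ∈ Finset.Ioc 0 s, G j) + G (s + 1))
        + ∑ j ∈ Finset.Ioc (s + 1) (n + 1 + 1), G j := by
    rw [← Finset.sum_Ioc_consecutive G (Nat.zero_le (s + 1)) (by omega),
        Finset.sum_Ioc_succ_top (Nat.zero_le s) G]
  have e3 : (∑ i ∈ Finset.Ioc (s + 1 + 1) (n + 2 + 1), F i)
      = -∑ j ∈ Finset.Ioc (s + 1) (n + 1 + 1), G j := by
    have hm : Finset.Ioc (s + 1 + 1) (n + 2 + 1)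
        = (Finset.Ioc (s + 1) (n + 1 + 1)).map (addRightEmbedding 1) := by
      rw [Finset.map_add_right_Ioc]
    rw [hm, Finset.sum_map, ← Finset.sum_neg_distrib]
    exact Finset.sum_congr rfl fun j hj => by
      simpa [addRightEmbedding_apply] using h4 j hj
  rw [e1, e2, e3, h3, Finset.sum_congr rfl h1, Finset.sum_congr rfl h2]
  abel

end Aux


lemma key (P : PrecubicalConn) (hP : CubicalConnAxioms P) (R : Type*) [CommRing R]
    (n s : ℕ) (hsn : s ≤ n) (β : Bool) (τ : P.K (n + 1)) :
    bdry P R (n + 2) (Finsupp.single (P.conn β (n + 2) (s + 1) (P.conn β (n + 1) (s + 1) τ)) 1)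
      + Gmap P R β (n + 1) (s + 1)
          (bdry P R (n + 1) (Finsupp.single (P.conn β (n + 1) (s + 1) τ) 1))
    = ((((-1 : R) ^ (s + 1 + 1)) * sgn R β) • Finsupp.single (P.conn β (n + 1) (s + 1) τ) 1
        + (2 : R) • Gmap P R β (n + 1) (s + 1) (Gmap P R β n s
            (∑ i ∈ Finset.Icc 1 s, ((-1 : R) ^ i) •
              ((Fmap P R false n i - Fmap P R true n i) (Finsupp.single τ 1)))))
      + (sgn R β * (-1 : R) ^ (s + 1)) •
          Finsupp.single
            (P.degen (n + 1) (s + 1) (P.degen n (s + 1) (P.face (!β) n (s + 1) τ))) 1 := by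
  rw [bdry_single, bdry_single]
  simp only [map_sum, map_smul, map_sub, LinearMap.sub_apply, Fmap_single, Gmap_single]
  have eIcc : ∀ m : ℕ, Finset.Icc 1 m = Finset.Ioc 0 m := fun m => by
    ext x; simp only [Finset.mem_Icc, Finset.mem_Ioc]; omega
  simp only [eIcc]
  have hfTh : ∀ α : Bool, ∀ j ∈ Finset.Ioc 0 s,
      P.face α (n + 1) j (P.conn β (n + 1) (s + 1) τ) = P.conn β n s (P.face α n j τ) := by
    intro α j hj
    simp only [Finset.mem_Ioc] at hj
    have h2 := hP.face_conn_lt α β n j (s + 1) τ (by omega) (by omega) (by omega)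
    simpa using h2
  have hfg : ∀ α : Bool, ∀ i ∈ Finset.Ioc 0 s,
      P.face α (n + 2) i (P.conn β (n + 2) (s + 1) (P.conn β (n + 1) (s + 1) τ))
        = P.conn β (n + 1) (s + 1) (P.conn β n s (P.face α n i τ)) := by
    intro α i hi
    have hi' := hi
    simp only [Finset.mem_Ioc] at hi'
    have h1 := hP.face_conn_lt α β (n + 1) i (s + 1) (P.conn β (n + 1) (s + 1) τ)
      (by omega) (by omega) (by omega)
    simp only [Nat.add_sub_cancel] at h1
    rw [h1, hfTh α i hi]
    exact hP.conn_conn β β n s s _ (by omega) le_rfl (by omega)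
  have hcan : ∀ α : Bool, ∀ j ∈ Finset.Ioc (s + 1) (n + 1 + 1),
      P.face α (n + 2) (j + 1) (P.conn β (n + 2) (s + 1) (P.conn β (n + 1) (s + 1) τ))
        = P.conn β (n + 1) (s + 1) (P.face α (n + 1) j (P.conn β (n + 1) (s + 1) τ)) := by
    intro α j hj
    simp only [Finset.mem_Ioc] at hj
    have h := hP.face_conn_gt α β (n + 1) (j + 1) (s + 1) (P.conn β (n + 1) (s + 1) τ)
      (by omega) (by omega) (by omega)
    simpa using h
  have hself2 : ∀ i, (i = s + 1 ∨ i = s + 1 + 1) →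
      P.face β (n + 2) i (P.conn β (n + 2) (s + 1) (P.conn β (n + 1) (s + 1) τ))
        = P.conn β (n + 1) (s + 1) τ := fun i hi =>
    hP.face_conn_self β (n + 2) i (s + 1) _ (by omega) (by omega) hi
  have hopp2 : ∀ i, (i = s + 1 ∨ i = s + 1 + 1) →
      P.face (!β) (n + 2) i (P.conn β (n + 2) (s + 1) (P.conn β (n + 1) (s + 1) τ))
        = P.degen (n + 1) (s + 1)
            (P.face (!β) (n + 1) (s + 1) (P.conn β (n + 1) (s + 1) τ)) :=
    fun i hi => hP.face_conn_opp (!β) β (n + 1) i (s + 1) _ (by omega) (by omega) hi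
      (Bool.not_ne_self β)
  have hself1 : P.face β (n + 1) (s + 1) (P.conn β (n + 1) (s + 1) τ) = τ :=
    hP.face_conn_self β (n + 1) (s + 1) (s + 1) τ (by omega) (by omega) (Or.inl rfl)
  have hopp1 : P.face (!β) (n + 1) (s + 1) (P.conn β (n + 1) (s + 1) τ)
      = P.degen n (s + 1) (P.face (!β) n (s + 1) τ) :=
    hP.face_conn_opp (!β) β n (s + 1) (s + 1) τ (by omega) (by omega) (Or.inl rfl)
      (Bool.not_ne_self β)
  have hGdeg : P.conn β (n + 1) (s + 1) (P.degen n (s + 1) (P.face (!β) n (s + 1) τ))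
      = P.degen (n + 1) (s + 1) (P.degen n (s + 1) (P.face (!β) n (s + 1) τ)) := by
    rw [hP.conn_degen_eq β n (s + 1) _ (by omega) (by omega),
      ← hP.degen_degen n (s + 1) (s + 1) _ (by omega) le_rfl (by omega)]
  have h3 : (((-1 : R) ^ (s + 1)) •
        ((Finsupp.single (P.face false (n + 2) (s + 1)
            (P.conn β (n + 2) (s + 1) (P.conn β (n + 1) (s + 1) τ))) (1 : R))
          - Finsupp.single (P.face true (n + 2) (s + 1)
            (P.conn β (n + 2) (s + 1) (P.conn β (n + 1) (s + 1) τ))) 1))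
      + (((-1 : R) ^ (s + 1 + 1)) •
        ((Finsupp.single (P.face false (n + 2) (s + 1 + 1)
            (P.conn β (n + 2) (s + 1) (P.conn β (n + 1) (s + 1) τ))) (1 : R))
          - Finsupp.single (P.face true (n + 2) (s + 1 + 1)
            (P.conn β (n + 2) (s + 1) (P.conn β (n + 1) (s + 1) τ))) 1)) = 0 := by
    cases β with
    | false =>
      simp only [Bool.not_false] at hopp2
      rw [hself2 _ (Or.inl rfl), hself2 _ (Or.inr rfl),
        hopp2 _ (Or.inl rfl), hopp2 _ (Or.inr rfl)]
      module
    | true =>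
      simp only [Bool.not_true] at hopp2
      rw [hself2 _ (Or.inl rfl), hself2 _ (Or.inr rfl),
        hopp2 _ (Or.inl rfl), hopp2 _ (Or.inr rfl)]
      module
  have h4 : ∀ j ∈ Finset.Ioc (s + 1) (n + 1 + 1),
      (((-1 : R) ^ (j + 1)) •
        ((Finsupp.single (P.face false (n + 2) (j + 1)
            (P.conn β (n + 2) (s + 1) (P.conn β (n + 1) (s + 1) τ))) (1 : R))
          - Finsupp.single (P.face true (n + 2) (j + 1)
            (P.conn β (n + 2) (s + 1) (P.conn β (n + 1) (s + 1) τ))) 1))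
      = -(((-1 : R) ^ j) •
        ((Finsupp.single (P.conn β (n + 1) (s + 1)
            (P.face false (n + 1) j (P.conn β (n + 1) (s + 1) τ))) (1 : R))
          - Finsupp.single (P.conn β (n + 1) (s + 1)
            (P.face true (n + 1) j (P.conn β (n + 1) (s + 1) τ))) 1)) := by
    intro j hj
    rw [hcan false j hj, hcan true j hj]
    module
  have hmid : (((-1 : R) ^ (s + 1)) •
        ((Finsupp.single (P.conn β (n + 1) (s + 1)
            (P.face false (n + 1) (s + 1) (P.conn β (n + 1) (s + 1) τ))) (1 : R))
          - Finsupp.single (P.conn β (n + 1) (s + 1)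
            (P.face true (n + 1) (s + 1) (P.conn β (n + 1) (s + 1) τ))) 1))
      = (((-1 : R) ^ (s + 1 + 1)) * sgn R β) • Finsupp.single (P.conn β (n + 1) (s + 1) τ) 1
        + (sgn R β * (-1 : R) ^ (s + 1)) •
            Finsupp.single
              (P.degen (n + 1) (s + 1) (P.degen n (s + 1) (P.face (!β) n (s + 1) τ))) 1 := by
    cases β with
    | false =>
      simp only [Bool.not_false] at hopp1 ⊢
      simp only [Bool.not_false] at hGdeg
      rw [hself1, hopp1, hGdeg]
      simp only [sgn, Bool.false_eq_true, if_false]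
      module
    | true =>
      simp only [Bool.not_true] at hopp1 ⊢
      simp only [Bool.not_true] at hGdeg
      rw [hself1, hopp1, hGdeg]
      simp only [sgn, if_true]
      module
  rw [assembly n s hsn _ _ _
    (fun i hi => by rw [hfg false i hi, hfg true i hi])
    (fun j hj => by rw [hfTh false j hj, hfTh true j hj])
    h3 h4]
  simp only [hmid]
  module

/-- Corollary 3.4(i): for `θ = Γ_t^β τ`, in the non-degenerate chain complex,
`∂ Γ_t^β θ + Γ_t^β ∂ θ = (-1)^{t+1} β θ + 2 Γ_t^β Γ_{t-1}^β ∑_{i=1}^{t-1} (-1)^i (f_i^- - f_i^+) τ`. -/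
theorem conn_of_conn_identity (P : PrecubicalConn) (hP : CubicalConnAxioms P)
    (R : Type*) [CommRing R] (n t : ℕ) (β : Bool) (τ : P.K (n + 1))
    (ht1 : 1 ≤ t) (ht2 : t ≤ n + 1) (θ : P.K (n + 2)) (hθ : θ = P.conn β (n + 1) t τ) :
    (bdry P R (n + 2) (Finsupp.single (P.conn β (n + 2) t θ) 1)
        + Gmap P R β (n + 1) t (bdry P R (n + 1) (Finsupp.single θ 1)))
      - ((((-1 : R) ^ (t + 1)) * sgn R β) • Finsupp.single θ 1
         + (2 : R) • Gmap P R β (n + 1) t (Gmap P R β n (t - 1)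
            (∑ i ∈ Finset.Icc 1 (t - 1),
              ((-1 : R) ^ i) • ((Fmap P R false n i - Fmap P R true n i) (Finsupp.single τ 1)))))
      ∈ degenSub P R (n + 2) := by
  obtain ⟨s, rfl⟩ : ∃ s, t = s + 1 := ⟨t - 1, by omega⟩
  subst hθ
  simp only [Nat.add_sub_cancel]
  rw [key P hP R n s (by omega) β τ, add_sub_cancel_left]
  refine Submodule.smul_mem _ _ (Submodule.subset_span ?_)
  refine ⟨_, ⟨s + 1, by omega, by omega, ?_⟩, rfl⟩
  rw [hP.face_degen_eq true (n + 1) (s + 1) _ (by omega) (by omega)]
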